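/- Every typable ground g-choreography is well-formed: if Π ⊢ G : ⟨φ,Λ⟩ is derivable for a ground g-choreography G, then ⟦G⟧ ≠ ⊥. -/

import Mathlib

open scoped Classical

namespace Choreo

/-! ## Labels -/

/-- Communication labels: output `A B!m` and input `A B?m`. -/
inductive Label (P M : Type) where
  | out : P → P → M → Label P M
  | inp : P → P → M → Label P M

variable {P M : Type}

/-- The subject of a label: the sender of an output, the receiver of an input. -/
def Label.sbj : Label P M → P
  | .out a _ _ => a
  | .inp _ b _ => b

/-- The set `L^!` of output labels (sender and receiver distinct). -/
def Lout : Set (Label P M) := {l | ∃ a b m, a ≠ b ∧ l = .out a b m}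

/-- The set `L^?` of input labels (sender and receiver distinct). -/
def Lin : Set (Label P M) := {l | ∃ a b m, a ≠ b ∧ l = .inp a b m}

/-- `L̂(A)`: the labels in `L` whose subject is `A`. -/
def hat (L : Set (Label P M)) (A : P) : Set (Label P M) := {l ∈ L | l.sbj = A}

/-- `sbj(L)`: the set of subjects of the labels in `L`. -/
def sbjSet (L : Set (Label P M)) : Set P := Label.sbj '' L

/-- `L − Π`: the labels in `L` whose subject is not in `Π`. -/
def lminus (L : Set (Label P M)) (Γ : Set P) : Set (Label P M) := {l ∈ L | l.sbj ∉ Γ}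

/-! ## Labelled event structures (events drawn from ℕ) -/

/-- Data of a labelled (prime) event structure over events drawn from `ℕ`. -/
structure ES (P M : Type) where
  ev : Set ℕ
  le : ℕ → ℕ → Prop
  conf : ℕ → ℕ → Prop
  lbl : ℕ → Label P M

namespace ES

variable (E : ES P M)

/-- Configurations: downward-closed conflict-free sets of events. -/
def Config (x : Set ℕ) : Prop :=
  x ⊆ E.ev ∧ (∀ e ∈ x, ∀ f ∈ E.ev, E.le f e → f ∈ x) ∧
    ∀ e ∈ x, ∀ f ∈ x, ¬ E.conf e f

/-- `MaxC E`: the ⊆-maximal configurations of `E`. -/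
def MaxC : Set (Set ℕ) := {x | E.Config x ∧ ∀ y, E.Config y → x ⊆ y → y = x}

/-- Minimal events of `s ⊆ E.ev` with respect to `E.le`. -/
def minIn (s : Set ℕ) : Set ℕ := {e ∈ s | ∀ f ∈ s, E.le f e → f = e}

/-- Maximal events of `s ⊆ E.ev` with respect to `E.le`. -/
def maxIn (s : Set ℕ) : Set ℕ := {e ∈ s | ∀ f ∈ s, E.le e f → f = e}

def minEv : Set ℕ := E.minIn E.ev
def maxEv : Set ℕ := E.maxIn E.ev

/-- Labels of the minimal events of `E`. -/
def minLbl : Set (Label P M) := E.lbl '' E.minEv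

/-- Labels of the maximal events of `E`. -/
def maxLbl : Set (Label P M) := E.lbl '' E.maxEv

/-- All labels occurring in `E`. -/
def lblSet : Set (Label P M) := E.lbl '' E.ev

/-- The projection `E↾A`: the restriction of `E` to the events whose label has subject `A`. -/
def proj (A : P) : ES P M where
  ev := {e ∈ E.ev | (E.lbl e).sbj = A}
  le u v := E.le u v ∧ (u ∈ E.ev ∧ (E.lbl u).sbj = A) ∧ (v ∈ E.ev ∧ (E.lbl v).sbj = A)
  conf u v := E.conf u v ∧ (u ∈ E.ev ∧ (E.lbl u).sbj = A) ∧ (v ∈ E.ev ∧ (E.lbl v).sbj = A)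
  lbl := E.lbl

/-- The projection `x↾A` of a configuration (as a set of events of `E`). -/
def projC (x : Set ℕ) (A : P) : Set ℕ := {e ∈ x | (E.lbl e).sbj = A}

end ES

/-! ## Constructions on event structures -/

/-- Tag for the events of a left component. -/
def tagL (e : ℕ) : ℕ := Nat.pair 0 e
/-- Tag for the events of a right component. -/
def tagR (e : ℕ) : ℕ := Nat.pair 1 e
/-- Tag for the events of the copy of the second component indexed by (the code of) a
maximal configuration of the first one. -/
def tagC (k e : ℕ) : ℕ := Nat.pair 1 (Nat.pair k e)

/-- A code (injective on finite sets) of sets of naturals. -/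
noncomputable def encSet (x : Set ℕ) : ℕ :=
  if h : x.Finite then h.toFinset.sum (fun n => 2 ^ n) else 0

/-- The empty event structure `ε`. -/
noncomputable def esEmpty [Nonempty P] [Nonempty M] : ES P M where
  ev := ∅
  le _ _ := False
  conf _ _ := False
  lbl _ := Label.out Classical.ofNonempty Classical.ofNonempty Classical.ofNonempty

/-- `⟦A→B:m⟧`: two ordered events labelled `A B!m < A B?m`. -/
def esAct (a b : P) (m : M) : ES P M where
  ev := {0, 1}
  le u v := (u = 0 ∧ v = 0) ∨ (u = 0 ∧ v = 1) ∨ (u = 1 ∧ v = 1)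
  conf _ _ := False
  lbl e := if e = 0 then Label.out a b m else Label.inp a b m

/-- Tensor product `E1 ⊗ E2` (componentwise disjoint union). -/
def esTensor (E1 E2 : ES P M) : ES P M where
  ev := (tagL '' E1.ev) ∪ (tagR '' E2.ev)
  le u v := (∃ e ∈ E1.ev, ∃ f ∈ E1.ev, E1.le e f ∧ u = tagL e ∧ v = tagL f) ∨
            (∃ e ∈ E2.ev, ∃ f ∈ E2.ev, E2.le e f ∧ u = tagR e ∧ v = tagR f)
  conf u v := (∃ e ∈ E1.ev, ∃ f ∈ E1.ev, E1.conf e f ∧ u = tagL e ∧ v = tagL f) ∨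
              (∃ e ∈ E2.ev, ∃ f ∈ E2.ev, E2.conf e f ∧ u = tagR e ∧ v = tagR f)
  lbl u := if (Nat.unpair u).1 = 0 then E1.lbl (Nat.unpair u).2 else E2.lbl (Nat.unpair u).2

/-- Sum `E1 + E2`: disjoint union with all cross pairs of events in conflict. -/
def esSum (E1 E2 : ES P M) : ES P M :=
  { esTensor E1 E2 with
    conf := fun u v => (esTensor E1 E2).conf u v ∨
      (∃ e ∈ E1.ev, ∃ f ∈ E2.ev, (u = tagL e ∧ v = tagR f) ∨ (u = tagR f ∧ v = tagL e)) }

/-- Sequential composition: appends to each maximal configuration `x` of `E1` a disjoint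
copy of `E2`, ordering an event of `x` below an event of the copy whenever their labels
have the same subject. -/
noncomputable def esSeq (E1 E2 : ES P M) : ES P M where
  ev := (tagL '' E1.ev) ∪ {u | ∃ x ∈ E1.MaxC, ∃ e ∈ E2.ev, u = tagC (encSet x) e}
  le u v :=
    (∃ e ∈ E1.ev, ∃ f ∈ E1.ev, E1.le e f ∧ u = tagL e ∧ v = tagL f) ∨
    (∃ x ∈ E1.MaxC, ∃ e ∈ E2.ev, ∃ f ∈ E2.ev, E2.le e f ∧
       u = tagC (encSet x) e ∧ v = tagC (encSet x) f) ∨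
    (∃ x ∈ E1.MaxC, ∃ e ∈ x, ∃ f ∈ E2.ev, (E1.lbl e).sbj = (E2.lbl f).sbj ∧
       u = tagL e ∧ v = tagC (encSet x) f)
  conf u v :=
    (∃ e ∈ E1.ev, ∃ f ∈ E1.ev, E1.conf e f ∧ u = tagL e ∧ v = tagL f) ∨
    (∃ x ∈ E1.MaxC, ∃ e ∈ E2.ev, ∃ f ∈ E2.ev, E2.conf e f ∧
       u = tagC (encSet x) e ∧ v = tagC (encSet x) f) ∨
    (∃ x ∈ E1.MaxC, ∃ x' ∈ E1.MaxC, x ≠ x' ∧ ∃ e ∈ E2.ev, ∃ f ∈ E2.ev,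
       u = tagC (encSet x) e ∧ v = tagC (encSet x') f) ∨
    (∃ x ∈ E1.MaxC, ∃ e ∈ E1.ev, (∃ e' ∈ x, E1.conf e e') ∧ ∃ f ∈ E2.ev,
       ((u = tagL e ∧ v = tagC (encSet x) f) ∨ (u = tagC (encSet x) f ∧ v = tagL e)))
  lbl u := if (Nat.unpair u).1 = 0 then E1.lbl (Nat.unpair u).2
           else E2.lbl (Nat.unpair (Nat.unpair u).2).2

/-! ## Well-branchedness -/

/-- Labels of the minimal events of the projection `E↾A`. -/
def minLblP (E : ES P M) (A : P) : Set (Label P M) := (E.proj A).minLbl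

/-- `A` is active for the branches `E1`, `E2`. -/
def active (E1 E2 : ES P M) (A : P) : Prop :=
  minLblP E1 A ≠ ∅ ∧ minLblP E2 A ≠ ∅ ∧
  Disjoint (minLblP E1 A) (minLblP E2 A) ∧
  minLblP E1 A ∪ minLblP E2 A ⊆ Lout

/-- `B` is passive for the branches `E1`, `E2`. -/
def passive (E1 E2 : ES P M) (B : P) : Prop :=
  Disjoint (minLblP E1 B) (minLblP E2 B) ∧
  minLblP E1 B ∪ minLblP E2 B ⊆ Lin ∧
  (minLblP E1 B = ∅ ↔ minLblP E2 B = ∅)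

/-- Well-branchedness: a unique active participant, all other participants passive. -/
def wb (E1 E2 : ES P M) : Prop :=
  ∃ A, active E1 E2 A ∧ (∀ A', active E1 E2 A' → A' = A) ∧
    ∀ B, B ≠ A → passive E1 E2 B

/-! ## Ground g-choreographies and their semantics -/

/-- Ground g-choreographies: `G ::= 0 | A→B:m | G;G | G|G | G+G`. -/
inductive GC (P M : Type) where
  | nil : GC P M
  | act : P → P → M → GC P M
  | seq : GC P M → GC P M → GC P M
  | par : GC P M → GC P M → GC P M
  | cho : GC P M → GC P M → GC P M

/-- `P(G)`: the participants occurring in `G`. -/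
def parts : GC P M → Set P
  | .nil => ∅
  | .act a b _ => {a, b}
  | .seq g1 g2 => parts g1 ∪ parts g2
  | .par g1 g2 => parts g1 ∪ parts g2
  | .cho g1 g2 => parts g1 ∪ parts g2

/-- The semantics `⟦G⟧`: a labelled event structure, or `none` (i.e. `⊥`) when a side
condition fails (the grammar requires `A ≠ B` in interactions; parallel requires disjoint
label sets; choice requires well-branchedness). -/
noncomputable def gsem [Nonempty P] [Nonempty M] : GC P M → Option (ES P M)
  | .nil => some esEmpty
  | .act a b m => if a = b then none else some (esAct a b m)
  | .seq g1 g2 =>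
      match gsem g1, gsem g2 with
      | some E1, some E2 => some (esSeq E1 E2)
      | _, _ => none
  | .par g1 g2 =>
      match gsem g1, gsem g2 with
      | some E1, some E2 =>
          if Disjoint E1.lblSet E2.lblSet then some (esTensor E1 E2) else none
      | _, _ => none
  | .cho g1 g2 =>
      match gsem g1, gsem g2 with
      | some E1, some E2 => if wb E1 E2 then some (esSum E1 E2) else none
      | _, _ => none

/-! ## The typing system -/

/-- Output uniform sets of labels. -/
def outUniform (U V : Set (Label P M)) : Prop := Disjoint U V ∧ U ∪ V ⊆ Lout

/-- Input uniform sets of labels. -/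
def inUniform (U V : Set (Label P M)) : Prop := Disjoint U V ∧ U ∪ V ⊆ Lin

/-- The compatibility condition `compch(φ1,φ2,Π)` of rule t-ch. -/
def compch (φ1 φ2 : Set (Label P M)) (Γ : Set P) : Prop :=
  ∃ A ∈ Γ,
    (outUniform (hat φ1 A) (hat φ2 A) ∧ hat φ1 A ≠ ∅ ∧ hat φ2 A ≠ ∅) ∧
    (∀ A' ∈ Γ, (outUniform (hat φ1 A') (hat φ2 A') ∧ hat φ1 A' ≠ ∅ ∧ hat φ2 A' ≠ ∅) →
        A' = A) ∧
    ∀ B ∈ Γ, B ≠ A →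
      inUniform (hat φ1 B) (hat φ2 B) ∧ (hat φ1 B = ∅ ↔ hat φ2 B = ∅)

/-- The typing judgement `Π ⊢ G : ⟨φ,Λ⟩`. -/
inductive Typing : Set P → GC P M → Set (Label P M) → Set (Label P M) → Prop where
  | temp : Typing ∅ GC.nil ∅ ∅
  | tint {a b : P} {m : M} (hab : a ≠ b) :
      Typing {a, b} (GC.act a b m)
        {Label.out a b m, Label.inp a b m} {Label.out a b m, Label.inp a b m}
  | tseq {Γ1 Γ2 : Set P} {g1 g2 : GC P M} {φ1 φ2 Λ1 Λ2 : Set (Label P M)} :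
      Typing Γ1 g1 φ1 Λ1 → Typing Γ2 g2 φ2 Λ2 →
      Typing (Γ1 ∪ Γ2) (GC.seq g1 g2) (φ1 ∪ lminus φ2 Γ1) (Λ2 ∪ lminus Λ1 Γ2)
  | tpar {Γ1 Γ2 : Set P} {g1 g2 : GC P M} {φ1 φ2 Λ1 Λ2 : Set (Label P M)} :
      Typing Γ1 g1 φ1 Λ1 → Typing Γ2 g2 φ2 Λ2 → Γ1 ∩ Γ2 = ∅ →
      Typing (Γ1 ∪ Γ2) (GC.par g1 g2) (φ1 ∪ φ2) (Λ1 ∪ Λ2)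
  | tch {Γ : Set P} {g1 g2 : GC P M} {φ1 φ2 Λ1 Λ2 : Set (Label P M)} :
      Typing Γ g1 φ1 Λ1 → Typing Γ g2 φ2 Λ2 → compch φ1 φ2 Γ →
      Typing Γ (GC.cho g1 g2) (φ1 ∪ φ2) (Λ1 ∪ Λ2)


/-! ## One-hole contexts and their typing (hole axiom `Γh ⊢ [·] : ⟨φh,Λh⟩`) -/

/-- g-choreography contexts with a single hole. -/
inductive Ctx (P M : Type) where
  | hole : Ctx P M
  | seqL : Ctx P M → GC P M → Ctx P M
  | seqR : GC P M → Ctx P M → Ctx P M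
  | parL : Ctx P M → GC P M → Ctx P M
  | parR : GC P M → Ctx P M → Ctx P M
  | choL : Ctx P M → GC P M → Ctx P M
  | choR : GC P M → Ctx P M → Ctx P M

/-- `C.fill g = C[g]`, the replacement of the hole of `C` by `g`. -/
def Ctx.fill : Ctx P M → GC P M → GC P M
  | .hole, g => g
  | .seqL c g2, g => GC.seq (c.fill g) g2
  | .seqR g1 c, g => GC.seq g1 (c.fill g)
  | .parL c g2, g => GC.par (c.fill g) g2
  | .parR g1 c, g => GC.par g1 (c.fill g)
  | .choL c g2, g => GC.cho (c.fill g) g2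
  | .choR g1 c, g => GC.cho g1 (c.fill g)

/-- Typing of one-hole contexts in the type system extended with the axiom
`Γh ⊢ [·] : ⟨φh,Λh⟩` for the hole. -/
inductive CTyping (Γh : Set P) (φh Λh : Set (Label P M)) :
    Set P → Ctx P M → Set (Label P M) → Set (Label P M) → Prop where
  | hole : CTyping Γh φh Λh Γh Ctx.hole φh Λh
  | seqL {Γ1 Γ2 : Set P} {c : Ctx P M} {g : GC P M} {φ1 φ2 Λ1 Λ2 : Set (Label P M)} :
      CTyping Γh φh Λh Γ1 c φ1 Λ1 → Typing Γ2 g φ2 Λ2 →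
      CTyping Γh φh Λh (Γ1 ∪ Γ2) (Ctx.seqL c g) (φ1 ∪ lminus φ2 Γ1) (Λ2 ∪ lminus Λ1 Γ2)
  | seqR {Γ1 Γ2 : Set P} {g : GC P M} {c : Ctx P M} {φ1 φ2 Λ1 Λ2 : Set (Label P M)} :
      Typing Γ1 g φ1 Λ1 → CTyping Γh φh Λh Γ2 c φ2 Λ2 →
      CTyping Γh φh Λh (Γ1 ∪ Γ2) (Ctx.seqR g c) (φ1 ∪ lminus φ2 Γ1) (Λ2 ∪ lminus Λ1 Γ2)
  | parL {Γ1 Γ2 : Set P} {c : Ctx P M} {g : GC P M} {φ1 φ2 Λ1 Λ2 : Set (Label P M)} :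
      CTyping Γh φh Λh Γ1 c φ1 Λ1 → Typing Γ2 g φ2 Λ2 → Γ1 ∩ Γ2 = ∅ →
      CTyping Γh φh Λh (Γ1 ∪ Γ2) (Ctx.parL c g) (φ1 ∪ φ2) (Λ1 ∪ Λ2)
  | parR {Γ1 Γ2 : Set P} {g : GC P M} {c : Ctx P M} {φ1 φ2 Λ1 Λ2 : Set (Label P M)} :
      Typing Γ1 g φ1 Λ1 → CTyping Γh φh Λh Γ2 c φ2 Λ2 → Γ1 ∩ Γ2 = ∅ →
      CTyping Γh φh Λh (Γ1 ∪ Γ2) (Ctx.parR g c) (φ1 ∪ φ2) (Λ1 ∪ Λ2)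
  | choL {Γ : Set P} {c : Ctx P M} {g : GC P M} {φ1 φ2 Λ1 Λ2 : Set (Label P M)} :
      CTyping Γh φh Λh Γ c φ1 Λ1 → Typing Γ g φ2 Λ2 → compch φ1 φ2 Γ →
      CTyping Γh φh Λh Γ (Ctx.choL c g) (φ1 ∪ φ2) (Λ1 ∪ Λ2)
  | choR {Γ : Set P} {g : GC P M} {c : Ctx P M} {φ1 φ2 Λ1 Λ2 : Set (Label P M)} :
      Typing Γ g φ1 Λ1 → CTyping Γh φh Λh Γ c φ2 Λ2 → compch φ1 φ2 Γ →
      CTyping Γh φh Λh Γ (Ctx.choR g c) (φ1 ∪ φ2) (Λ1 ∪ Λ2)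

/-! ## Refinable actions, t-ref, and refinement -/

/-- The three side conditions of the axiom schema t-ref for the refinable action
`A → m1…mn : B1,…,Bn`, represented by the initiator `A` and the nonempty list
`l = [(m1,B1),…,(mn,Bn)]` with pairwise distinct `Bi`. -/
def trefCond (Γ : Set P) (φ Λ : Set (Label P M)) (A : P) (l : List (M × P)) : Prop :=
  l ≠ [] ∧ (l.map Prod.snd).Nodup ∧
  sbjSet φ = Γ ∧ sbjSet Λ = Γ ∧ sbjSet (φ ∩ Lout) = {A} ∧
  ∀ p ∈ l, ∃ C ∈ Γ, hat Λ p.2 = {Label.inp C p.2 p.1}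

/-- `G ref A→m1…mn:B1,…,Bn`: the ground g-choreography `G` refines the refinable action
given by initiator `A` and list `l = [(m1,B1),…,(mn,Bn)]`. -/
def Refines [Nonempty P] [Nonempty M] (G : GC P M) (A : P) (l : List (M × P)) : Prop :=
  ∃ E : ES P M, gsem G = some E ∧
    sbjSet E.minLbl = {A} ∧
    ∀ x ∈ E.MaxC, ∀ p ∈ l, ∃ C ∈ parts G,
      Label.inp C p.2 p.1 ∈ E.lbl '' (E.maxIn (E.projC x p.2))

/-! ## Multi-hole contexts -/

/-- g-choreography contexts with (numbered) holes. -/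
inductive MCtx (P M : Type) where
  | hole : ℕ → MCtx P M
  | nil : MCtx P M
  | act : P → P → M → MCtx P M
  | seq : MCtx P M → MCtx P M → MCtx P M
  | par : MCtx P M → MCtx P M → MCtx P M
  | cho : MCtx P M → MCtx P M → MCtx P M

/-- The (indices of the) holes occurring in a multi-hole context. -/
def MCtx.holes : MCtx P M → List ℕ
  | .hole i => [i]
  | .nil => []
  | .act _ _ _ => []
  | .seq c1 c2 => c1.holes ++ c2.holes
  | .par c1 c2 => c1.holes ++ c2.holes
  | .cho c1 c2 => c1.holes ++ c2.holes

/-- `C.fill g`: replace each hole `[·]i` by `g i`. -/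
def MCtx.fill : MCtx P M → (ℕ → GC P M) → GC P M
  | .hole i, g => g i
  | .nil, _ => GC.nil
  | .act a b m, _ => GC.act a b m
  | .seq c1 c2, g => GC.seq (c1.fill g) (c2.fill g)
  | .par c1 c2, g => GC.par (c1.fill g) (c2.fill g)
  | .cho c1 c2, g => GC.cho (c1.fill g) (c2.fill g)

/-- Typing of multi-hole contexts in the extended type system, where hole `i` is typed by
the axiom `(σ i).1 ⊢ [·]i : ⟨(σ i).2.1, (σ i).2.2⟩`. -/
inductive MTyping (σ : ℕ → Set P × Set (Label P M) × Set (Label P M)) :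
    Set P → MCtx P M → Set (Label P M) → Set (Label P M) → Prop where
  | hole (i : ℕ) : MTyping σ (σ i).1 (MCtx.hole i) (σ i).2.1 (σ i).2.2
  | temp : MTyping σ ∅ MCtx.nil ∅ ∅
  | tint {a b : P} {m : M} (hab : a ≠ b) :
      MTyping σ {a, b} (MCtx.act a b m)
        {Label.out a b m, Label.inp a b m} {Label.out a b m, Label.inp a b m}
  | tseq {Γ1 Γ2 : Set P} {c1 c2 : MCtx P M} {φ1 φ2 Λ1 Λ2 : Set (Label P M)} :
      MTyping σ Γ1 c1 φ1 Λ1 → MTyping σ Γ2 c2 φ2 Λ2 →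
      MTyping σ (Γ1 ∪ Γ2) (MCtx.seq c1 c2) (φ1 ∪ lminus φ2 Γ1) (Λ2 ∪ lminus Λ1 Γ2)
  | tpar {Γ1 Γ2 : Set P} {c1 c2 : MCtx P M} {φ1 φ2 Λ1 Λ2 : Set (Label P M)} :
      MTyping σ Γ1 c1 φ1 Λ1 → MTyping σ Γ2 c2 φ2 Λ2 → Γ1 ∩ Γ2 = ∅ →
      MTyping σ (Γ1 ∪ Γ2) (MCtx.par c1 c2) (φ1 ∪ φ2) (Λ1 ∪ Λ2)
  | tch {Γ : Set P} {c1 c2 : MCtx P M} {φ1 φ2 Λ1 Λ2 : Set (Label P M)} :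
      MTyping σ Γ c1 φ1 Λ1 → MTyping σ Γ c2 φ2 Λ2 → compch φ1 φ2 Γ →
      MTyping σ Γ (MCtx.cho c1 c2) (φ1 ∪ φ2) (Λ1 ∪ Λ2)
/-! ## Auxiliary lemmas for soundness -/

section Aux
variable {P M : Type}

lemma tagL_inj : Function.Injective tagL := fun a b h => by
  simpa [tagL, Nat.pair_eq_pair] using h

lemma tagR_inj : Function.Injective tagR := fun a b h => by
  simpa [tagR, Nat.pair_eq_pair] using h

lemma tagL_ne_tagR (e f : ℕ) : tagL e ≠ tagR f := by
  simp [tagL, tagR, Nat.pair_eq_pair]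

lemma tagC_eq_tagR (k e : ℕ) : tagC k e = tagR (Nat.pair k e) := rfl

lemma tagL_ne_tagC (e k f : ℕ) : tagL e ≠ tagC k f := by
  simp [tagL, tagC, Nat.pair_eq_pair]

lemma tagC_inj {k e k' e' : ℕ} (h : tagC k e = tagC k' e') : k = k' ∧ e = e' := by
  simpa [tagC, Nat.pair_eq_pair] using h

lemma encSet_inj {x y : Set ℕ} (hx : x.Finite) (hy : y.Finite)
    (h : encSet x = encSet y) : x = y := by
  rw [encSet, encSet, dif_pos hx, dif_pos hy] at h
  have := Finset.geomSum_injective (le_refl 2) h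
  rw [← hx.coe_toFinset, ← hy.coe_toFinset, this]

end Aux
section ESAux
variable {P M : Type}

lemma config_empty (E : ES P M) : E.Config ∅ :=
  ⟨Set.empty_subset _, by simp, by simp⟩

lemma config_finite {E : ES P M} (hfin : E.ev.Finite) {x : Set ℕ} (hx : E.Config x) :
    x.Finite := hfin.subset hx.1

lemma maxC_finite {E : ES P M} (hfin : E.ev.Finite) {x : Set ℕ} (hx : x ∈ E.MaxC) :
    x.Finite := config_finite hfin hx.1

lemma exists_maxC {E : ES P M} (hfin : E.ev.Finite) {y : Set ℕ} (hy : E.Config y) :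
    ∃ x ∈ E.MaxC, y ⊆ x := by
  classical
  have hS : {x : Set ℕ | E.Config x ∧ y ⊆ x}.Finite := by
    apply (hfin.finite_subsets).subset
    rintro x ⟨hx, -⟩; exact hx.1
  obtain ⟨x, hx, hmax⟩ : ∃ x ∈ {x : Set ℕ | E.Config x ∧ y ⊆ x},
      ∀ z ∈ {x : Set ℕ | E.Config x ∧ y ⊆ x}, id x ≤ id z → id x = id z := by
    obtain ⟨x, hx, hm⟩ := hS.exists_maximal ⟨y, hy, le_refl y⟩
    exact ⟨x, hx, fun z hz hxz => le_antisymm hxz (hm hz hxz)⟩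
  refine ⟨x, ⟨hx.1, ?_⟩, hx.2⟩
  intro z hz hxz
  exact (hmax z ⟨hz, hx.2.trans hxz⟩ hxz).symm

lemma maxC_nonempty (E : ES P M) (hfin : E.ev.Finite) : ∃ x, x ∈ E.MaxC := by
  obtain ⟨x, hx, -⟩ := exists_maxC hfin (config_empty E)
  exact ⟨x, hx⟩

lemma mem_minLblP {E : ES P M} {A : P} {l : Label P M} :
    l ∈ minLblP E A ↔ ∃ e, (e ∈ E.ev ∧ (E.lbl e).sbj = A) ∧ E.lbl e = l ∧
      ∀ f, f ∈ E.ev → (E.lbl f).sbj = A → E.le f e → f = e := by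
  constructor
  · rintro ⟨e, ⟨⟨he, hA⟩, hmin⟩, rfl⟩
    exact ⟨e, ⟨he, hA⟩, rfl, fun f hf hfA hle => hmin f ⟨hf, hfA⟩ ⟨hle, ⟨hf, hfA⟩, ⟨he, hA⟩⟩⟩
  · rintro ⟨e, ⟨he, hA⟩, rfl, hmin⟩
    exact ⟨e, ⟨⟨he, hA⟩, fun f hf hle => hmin f hf.1 hf.2 hle.1⟩, rfl⟩

lemma minLblP_empty {E : ES P M} {A : P} (h : ∀ e ∈ E.ev, (E.lbl e).sbj ≠ A) :
    minLblP E A = ∅ := by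
  ext l
  simp only [Set.mem_empty_iff_false, iff_false, mem_minLblP]
  rintro ⟨e, ⟨he, hA⟩, -, -⟩
  exact h e he hA

/-- Invariant for the soundness proof. -/
structure Good (E : ES P M) (Γ : Set P) : Prop where
  fin : E.ev.Finite
  confSymm : ∀ u v, E.conf u v → E.conf v u
  sbj : sbjSet E.lblSet = Γ
  cover : ∀ x ∈ E.MaxC, ∀ A ∈ Γ, ∃ e ∈ x, (E.lbl e).sbj = A

lemma Good.sbj_mem {E : ES P M} {Γ : Set P} (h : Good E Γ) {e : ℕ} (he : e ∈ E.ev) :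
    (E.lbl e).sbj ∈ Γ := by
  rw [← h.sbj]; exact ⟨E.lbl e, ⟨e, he, rfl⟩, rfl⟩

lemma Good.mem_sbj {E : ES P M} {Γ : Set P} (h : Good E Γ) {A : P} (hA : A ∈ Γ) :
    ∃ e ∈ E.ev, (E.lbl e).sbj = A := by
  rw [← h.sbj] at hA
  obtain ⟨l, ⟨e, he, rfl⟩, hl⟩ := hA
  exact ⟨e, he, hl⟩

lemma Good.minLblP_empty' {E : ES P M} {Γ : Set P} (h : Good E Γ) {A : P} (hA : A ∉ Γ) :
    minLblP E A = ∅ :=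
  minLblP_empty fun e he hs => hA (hs ▸ h.sbj_mem he)

lemma hat_union (U V : Set (Label P M)) (A : P) : hat (U ∪ V) A = hat U A ∪ hat V A := by
  ext l; simp only [hat, Set.mem_setOf_eq, Set.mem_union]; tauto

lemma hat_lminus_mem {φ : Set (Label P M)} {Γ : Set P} {A : P} (hA : A ∈ Γ) :
    hat (lminus φ Γ) A = ∅ := by
  ext l
  simp only [hat, lminus, Set.mem_setOf_eq, Set.mem_empty_iff_false, iff_false]
  rintro ⟨⟨-, hn⟩, hs⟩; exact hn (hs ▸ hA)

lemma hat_lminus_not_mem {φ : Set (Label P M)} {Γ : Set P} {A : P} (hA : A ∉ Γ) :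
    hat (lminus φ Γ) A = hat φ A := by
  ext l
  simp only [hat, lminus, Set.mem_setOf_eq]
  constructor
  · rintro ⟨⟨h1, -⟩, h2⟩; exact ⟨h1, h2⟩
  · rintro ⟨h1, h2⟩; exact ⟨⟨h1, h2 ▸ hA⟩, h2⟩

end ESAux
section NilAct
variable {P M : Type} [Nonempty P] [Nonempty M]

lemma good_esEmpty : Good (esEmpty : ES P M) ∅ := by
  refine ⟨Set.finite_empty, fun u v h => h.elim, ?_, ?_⟩
  · simp [sbjSet, ES.lblSet, esEmpty]
  · intro x hx A hA; exact hA.elim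

lemma hat_minLblP_esEmpty (A : P) : hat (∅ : Set (Label P M)) A = minLblP esEmpty A := by
  rw [minLblP_empty (fun e he => (Set.notMem_empty e he).elim)]
  ext l; simp [hat]

end NilAct

section Act
variable {P M : Type} {a b : P} {m : M}

lemma esAct_lbl0 : (esAct a b m).lbl 0 = Label.out a b m := rfl
lemma esAct_lbl1 : (esAct a b m).lbl 1 = Label.inp a b m := by simp [esAct]

lemma good_esAct (hab : a ≠ b) : Good (esAct a b m) {a, b} := by
  refine ⟨(Set.finite_singleton 1).insert 0, fun u v h => h.elim, ?_, ?_⟩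
  · ext A
    simp only [sbjSet, ES.lblSet, esAct, Set.image_image]
    constructor
    · rintro ⟨e, he, rfl⟩
      rcases he with rfl | rfl
      · left; rfl
      · right; simp [Label.sbj]
    · rintro (rfl | rfl)
      · exact ⟨0, Or.inl rfl, rfl⟩
      · exact ⟨1, Or.inr rfl, by simp [Label.sbj]⟩
  · intro x hx A hA
    have hev : (esAct a b m).Config {0, 1} := by
      refine ⟨le_refl _, fun e he f hf _ => hf, fun e _ f _ h => h⟩
    have hxe : ({0, 1} : Set ℕ) = x := hx.2 _ hev hx.1.1
    rcases hA with rfl | rfl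
    · exact ⟨0, by rw [← hxe]; exact Or.inl rfl, rfl⟩
    · refine ⟨1, by rw [← hxe]; exact Or.inr rfl, ?_⟩
      rw [esAct_lbl1]; rfl

lemma hat_minLblP_esAct (hab : a ≠ b) (A : P) :
    hat {Label.out a b m, Label.inp a b m} A = minLblP (esAct a b m) A := by
  classical
  have hsbj_out : (Label.out a b m).sbj = a := rfl
  have hsbj_inp : (Label.inp a b m).sbj = b := rfl
  ext l
  rw [mem_minLblP]
  constructor
  · rintro ⟨hl, hsl⟩
    rcases hl with rfl | rfl
    · refine ⟨0, ⟨Or.inl rfl, hsl⟩, rfl, ?_⟩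
      intro f hf hfs hle
      rcases hf with rfl | rfl
      · rfl
      · rw [esAct_lbl1] at hfs
        exact absurd (hsl.trans hfs.symm : a = b) hab
    · refine ⟨1, ⟨Or.inr rfl, by rw [esAct_lbl1]; exact hsl⟩, esAct_lbl1, ?_⟩
      intro f hf hfs hle
      rcases hf with rfl | rfl
      · exact absurd ((hfs.trans hsl.symm : a = b)) hab
      · rfl
  · rintro ⟨e, ⟨he, hA⟩, rfl, -⟩
    rcases he with rfl | rfl
    · exact ⟨Or.inl rfl, hA⟩
    · rw [esAct_lbl1] at hA ⊢
      exact ⟨Or.inr rfl, hA⟩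

end Act
section TensorSum
variable {P M : Type} {E1 E2 : ES P M} {Γ1 Γ2 Γ : Set P} {z x1 x2 : Set ℕ}

/-- Preimage of the left injection. -/
def preL (z : Set ℕ) : Set ℕ := {e | tagL e ∈ z}
/-- Preimage of the right injection. -/
def preR (z : Set ℕ) : Set ℕ := {e | tagR e ∈ z}

lemma mem_sbjSet_iff {E : ES P M} {A : P} :
    A ∈ sbjSet E.lblSet ↔ ∃ e ∈ E.ev, (E.lbl e).sbj = A := by
  constructor
  · rintro ⟨l, ⟨e, he, rfl⟩, rfl⟩; exact ⟨e, he, rfl⟩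
  · rintro ⟨e, he, h⟩; exact ⟨E.lbl e, ⟨e, he, rfl⟩, h⟩

lemma tensor_lbl_tagL (e : ℕ) : (esTensor E1 E2).lbl (tagL e) = E1.lbl e := by
  simp [esTensor, tagL, Nat.unpair_pair]

lemma tensor_lbl_tagR (e : ℕ) : (esTensor E1 E2).lbl (tagR e) = E2.lbl e := by
  simp [esTensor, tagR, Nat.unpair_pair]

lemma sum_lbl_tagL (e : ℕ) : (esSum E1 E2).lbl (tagL e) = E1.lbl e := tensor_lbl_tagL e
lemma sum_lbl_tagR (e : ℕ) : (esSum E1 E2).lbl (tagR e) = E2.lbl e := tensor_lbl_tagR e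

lemma tensor_mem_ev_L {e : ℕ} (h : tagL e ∈ (esTensor E1 E2).ev) : e ∈ E1.ev := by
  rcases h with ⟨e', he', heq⟩ | ⟨e', _, heq⟩
  · rwa [← tagL_inj heq]
  · exact absurd heq.symm (tagL_ne_tagR _ _)

lemma tensor_mem_ev_R {e : ℕ} (h : tagR e ∈ (esTensor E1 E2).ev) : e ∈ E2.ev := by
  rcases h with ⟨e', _, heq⟩ | ⟨e', he', heq⟩
  · exact absurd heq (tagL_ne_tagR _ _)
  · rwa [← tagR_inj heq]

lemma config_tensor_mk (h1 : E1.Config x1) (h2 : E2.Config x2) :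
    (esTensor E1 E2).Config (tagL '' x1 ∪ tagR '' x2) := by
  refine ⟨Set.union_subset_union (Set.image_mono h1.1) (Set.image_mono h2.1), ?_, ?_⟩
  · rintro e he f hf hle
    rcases hle with ⟨e0, he0, f0, hf0, hle0, rfl, rfl⟩ | ⟨e0, he0, f0, hf0, hle0, rfl, rfl⟩
    · rcases he with ⟨g, hg, hgeq⟩ | ⟨g, hg, hgeq⟩
      · obtain rfl := tagL_inj hgeq
        exact Or.inl ⟨e0, h1.2.1 g hg e0 he0 hle0, rfl⟩
      · exact absurd hgeq (tagL_ne_tagR _ _).symm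
    · rcases he with ⟨g, hg, hgeq⟩ | ⟨g, hg, hgeq⟩
      · exact absurd hgeq (tagL_ne_tagR _ _)
      · obtain rfl := tagR_inj hgeq
        exact Or.inr ⟨e0, h2.2.1 g hg e0 he0 hle0, rfl⟩
  · rintro u hu v hv hc
    rcases hc with ⟨e0, he0, f0, hf0, hc0, rfl, rfl⟩ | ⟨e0, he0, f0, hf0, hc0, rfl, rfl⟩
    · rcases hu with ⟨g, hg, hgeq⟩ | ⟨g, hg, hgeq⟩
      · rcases hv with ⟨g', hg', hgeq'⟩ | ⟨g', hg', hgeq'⟩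
        · obtain rfl := tagL_inj hgeq
          obtain rfl := tagL_inj hgeq'
          exact h1.2.2 _ hg _ hg' hc0
        · exact absurd hgeq' (tagL_ne_tagR _ _).symm
      · exact absurd hgeq (tagL_ne_tagR _ _).symm
    · rcases hu with ⟨g, hg, hgeq⟩ | ⟨g, hg, hgeq⟩
      · exact absurd hgeq (tagL_ne_tagR _ _)
      · rcases hv with ⟨g', hg', hgeq'⟩ | ⟨g', hg', hgeq'⟩
        · exact absurd hgeq' (tagL_ne_tagR _ _)
        · obtain rfl := tagR_inj hgeq
          obtain rfl := tagR_inj hgeq'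
          exact h2.2.2 _ hg _ hg' hc0
end TensorSum
section TensorSum2
variable {P M : Type} {E1 E2 : ES P M} {Γ1 Γ2 Γ : Set P} {z x1 x2 : Set ℕ}

lemma tensor_decomp (hz : (esTensor E1 E2).Config z) :
    E1.Config (preL z) ∧ E2.Config (preR z) ∧ z = tagL '' preL z ∪ tagR '' preR z := by
  have hsubL : preL z ⊆ E1.ev := fun e he => tensor_mem_ev_L (hz.1 he)
  have hsubR : preR z ⊆ E2.ev := fun e he => tensor_mem_ev_R (hz.1 he)
  refine ⟨⟨hsubL, ?_, ?_⟩, ⟨hsubR, ?_, ?_⟩, ?_⟩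
  · intro e he f hf hle
    exact hz.2.1 (tagL e) he (tagL f) (Or.inl ⟨f, hf, rfl⟩)
      (Or.inl ⟨f, hf, e, hsubL he, hle, rfl, rfl⟩)
  · intro e he f hf hc
    exact hz.2.2 (tagL e) he (tagL f) hf
      (Or.inl ⟨e, hsubL he, f, hsubL hf, hc, rfl, rfl⟩)
  · intro e he f hf hle
    exact hz.2.1 (tagR e) he (tagR f) (Or.inr ⟨f, hf, rfl⟩)
      (Or.inr ⟨f, hf, e, hsubR he, hle, rfl, rfl⟩)
  · intro e he f hf hc
    exact hz.2.2 (tagR e) he (tagR f) hf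
      (Or.inr ⟨e, hsubR he, f, hsubR hf, hc, rfl, rfl⟩)
  · ext u
    constructor
    · intro hu
      rcases hz.1 hu with ⟨e, _, rfl⟩ | ⟨e, _, rfl⟩
      · exact Or.inl ⟨e, hu, rfl⟩
      · exact Or.inr ⟨e, hu, rfl⟩
    · rintro (⟨e, he, rfl⟩ | ⟨e, he, rfl⟩) <;> exact ‹_›

lemma tensor_maxC (hz : z ∈ (esTensor E1 E2).MaxC) :
    preL z ∈ E1.MaxC ∧ preR z ∈ E2.MaxC := by
  obtain ⟨h1, h2, hzeq⟩ := tensor_decomp hz.1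
  constructor
  · refine ⟨h1, fun y hy hsub => ?_⟩
    have hw : (esTensor E1 E2).Config (tagL '' y ∪ tagR '' preR z) := config_tensor_mk hy h2
    have hzw : z ⊆ tagL '' y ∪ tagR '' preR z := by
      conv_lhs => rw [hzeq]
      exact Set.union_subset_union_left _ (Set.image_mono hsub)
    have := hz.2 _ hw hzw
    apply Set.Subset.antisymm _ hsub
    intro e he
    have : tagL e ∈ z := by
      rw [← this]; exact Or.inl ⟨e, he, rfl⟩
    exact this
  · refine ⟨h2, fun y hy hsub => ?_⟩
    have hw : (esTensor E1 E2).Config (tagL '' preL z ∪ tagR '' y) := config_tensor_mk h1 hy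
    have hzw : z ⊆ tagL '' preL z ∪ tagR '' y := by
      conv_lhs => rw [hzeq]
      exact Set.union_subset_union_right _ (Set.image_mono hsub)
    have := hz.2 _ hw hzw
    apply Set.Subset.antisymm _ hsub
    intro e he
    have : tagR e ∈ z := by
      rw [← this]; exact Or.inr ⟨e, he, rfl⟩
    exact this

lemma minLblP_tensor (A : P) :
    minLblP (esTensor E1 E2) A = minLblP E1 A ∪ minLblP E2 A := by
  ext l
  rw [Set.mem_union, mem_minLblP, mem_minLblP, mem_minLblP]
  constructor
  · rintro ⟨u, ⟨hu, hsbj⟩, rfl, hmin⟩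
    rcases hu with ⟨e, he, rfl⟩ | ⟨e, he, rfl⟩
    · left
      rw [tensor_lbl_tagL] at hsbj ⊢
      refine ⟨e, ⟨he, hsbj⟩, rfl, fun f hf hfs hle => ?_⟩
      have := hmin (tagL f) (Or.inl ⟨f, hf, rfl⟩)
        (by rwa [tensor_lbl_tagL]) (Or.inl ⟨f, hf, e, he, hle, rfl, rfl⟩)
      exact tagL_inj this
    · right
      rw [tensor_lbl_tagR] at hsbj ⊢
      refine ⟨e, ⟨he, hsbj⟩, rfl, fun f hf hfs hle => ?_⟩
      have := hmin (tagR f) (Or.inr ⟨f, hf, rfl⟩)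
        (by rwa [tensor_lbl_tagR]) (Or.inr ⟨f, hf, e, he, hle, rfl, rfl⟩)
      exact tagR_inj this
  · rintro (⟨e, ⟨he, hsbj⟩, rfl, hmin⟩ | ⟨e, ⟨he, hsbj⟩, rfl, hmin⟩)
    · refine ⟨tagL e, ⟨Or.inl ⟨e, he, rfl⟩, by rwa [tensor_lbl_tagL]⟩, tensor_lbl_tagL e, ?_⟩
      rintro f hf hfs (⟨e0, he0, f0, hf0, hle0, rfl, heq⟩ | ⟨e0, he0, f0, hf0, hle0, rfl, heq⟩)
      · obtain rfl := tagL_inj heq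
        rw [tensor_lbl_tagL] at hfs
        rw [hmin e0 he0 hfs hle0]
      · exact absurd heq (tagL_ne_tagR _ _)
    · refine ⟨tagR e, ⟨Or.inr ⟨e, he, rfl⟩, by rwa [tensor_lbl_tagR]⟩, tensor_lbl_tagR e, ?_⟩
      rintro f hf hfs (⟨e0, he0, f0, hf0, hle0, rfl, heq⟩ | ⟨e0, he0, f0, hf0, hle0, rfl, heq⟩)
      · exact absurd heq ((tagL_ne_tagR _ _).symm)
      · obtain rfl := tagR_inj heq
        rw [tensor_lbl_tagR] at hfs
        rw [hmin e0 he0 hfs hle0]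

lemma tensor_sbjSet :
    sbjSet (esTensor E1 E2).lblSet = sbjSet E1.lblSet ∪ sbjSet E2.lblSet := by
  ext A
  rw [Set.mem_union, mem_sbjSet_iff, mem_sbjSet_iff, mem_sbjSet_iff]
  constructor
  · rintro ⟨u, hu, hsbj⟩
    rcases hu with ⟨e, he, rfl⟩ | ⟨e, he, rfl⟩
    · rw [tensor_lbl_tagL] at hsbj; exact Or.inl ⟨e, he, hsbj⟩
    · rw [tensor_lbl_tagR] at hsbj; exact Or.inr ⟨e, he, hsbj⟩
  · rintro (⟨e, he, hsbj⟩ | ⟨e, he, hsbj⟩)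
    · exact ⟨tagL e, Or.inl ⟨e, he, rfl⟩, by rwa [tensor_lbl_tagL]⟩
    · exact ⟨tagR e, Or.inr ⟨e, he, rfl⟩, by rwa [tensor_lbl_tagR]⟩

lemma good_tensor (g1 : Good E1 Γ1) (g2 : Good E2 Γ2) :
    Good (esTensor E1 E2) (Γ1 ∪ Γ2) := by
  refine ⟨(g1.fin.image tagL).union (g2.fin.image tagR), ?_, ?_, ?_⟩
  · rintro u v (⟨e, he, f, hf, hc, rfl, rfl⟩ | ⟨e, he, f, hf, hc, rfl, rfl⟩)
    · exact Or.inl ⟨f, hf, e, he, g1.confSymm _ _ hc, rfl, rfl⟩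
    · exact Or.inr ⟨f, hf, e, he, g2.confSymm _ _ hc, rfl, rfl⟩
  · rw [tensor_sbjSet, g1.sbj, g2.sbj]
  · intro x hx A hA
    obtain ⟨hL, hR⟩ := tensor_maxC hx
    rcases hA with hA | hA
    · obtain ⟨e, he, hsbj⟩ := g1.cover _ hL A hA
      exact ⟨tagL e, he, by rwa [tensor_lbl_tagL]⟩
    · obtain ⟨e, he, hsbj⟩ := g2.cover _ hR A hA
      exact ⟨tagR e, he, by rwa [tensor_lbl_tagR]⟩

end TensorSum2
section SumLemmas
variable {P M : Type} {E1 E2 : ES P M} {Γ : Set P} {z x1 x2 : Set ℕ}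

lemma minLblP_sum (A : P) :
    minLblP (esSum E1 E2) A = minLblP E1 A ∪ minLblP E2 A :=
  minLblP_tensor A

lemma sum_sbjSet :
    sbjSet (esSum E1 E2).lblSet = sbjSet E1.lblSet ∪ sbjSet E2.lblSet :=
  tensor_sbjSet

lemma config_sum_L (h1 : E1.Config x1) : (esSum E1 E2).Config (tagL '' x1) := by
  refine ⟨fun u hu => ?_, ?_, ?_⟩
  · obtain ⟨e, he, rfl⟩ := hu
    exact Or.inl ⟨e, h1.1 he, rfl⟩
  · rintro e he f hf hle
    rcases hle with ⟨e0, he0, f0, hf0, hle0, rfl, rfl⟩ | ⟨e0, he0, f0, hf0, hle0, rfl, rfl⟩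
    · rcases he with ⟨g, hg, hgeq⟩
      obtain rfl := tagL_inj hgeq
      exact ⟨e0, h1.2.1 g hg e0 he0 hle0, rfl⟩
    · rcases he with ⟨g, hg, hgeq⟩
      exact absurd hgeq (tagL_ne_tagR _ _)
  · rintro u hu v hv hc
    rcases hc with (⟨e0, he0, f0, hf0, hc0, rfl, rfl⟩ | ⟨e0, he0, f0, hf0, hc0, rfl, rfl⟩) |
      ⟨e0, he0, f0, hf0, (⟨rfl, rfl⟩ | ⟨rfl, rfl⟩)⟩
    · obtain ⟨g, hg, hgeq⟩ := hu
      obtain rfl := tagL_inj hgeq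
      obtain ⟨g', hg', hgeq'⟩ := hv
      obtain rfl := tagL_inj hgeq'
      exact h1.2.2 _ hg _ hg' hc0
    · obtain ⟨g, hg, hgeq⟩ := hu
      exact absurd hgeq (tagL_ne_tagR _ _)
    · obtain ⟨g', hg', hgeq'⟩ := hv
      exact absurd hgeq' (tagL_ne_tagR _ _)
    · obtain ⟨g, hg, hgeq⟩ := hu
      exact absurd hgeq (tagL_ne_tagR _ _)

lemma config_sum_R (h2 : E2.Config x2) : (esSum E1 E2).Config (tagR '' x2) := by
  refine ⟨fun u hu => ?_, ?_, ?_⟩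
  · obtain ⟨e, he, rfl⟩ := hu
    exact Or.inr ⟨e, h2.1 he, rfl⟩
  · rintro e he f hf hle
    rcases hle with ⟨e0, he0, f0, hf0, hle0, rfl, rfl⟩ | ⟨e0, he0, f0, hf0, hle0, rfl, rfl⟩
    · rcases he with ⟨g, hg, hgeq⟩
      exact absurd hgeq.symm (tagL_ne_tagR _ _)
    · rcases he with ⟨g, hg, hgeq⟩
      obtain rfl := tagR_inj hgeq
      exact ⟨e0, h2.2.1 g hg e0 he0 hle0, rfl⟩
  · rintro u hu v hv hc
    rcases hc with (⟨e0, he0, f0, hf0, hc0, rfl, rfl⟩ | ⟨e0, he0, f0, hf0, hc0, rfl, rfl⟩) |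
      ⟨e0, he0, f0, hf0, (⟨rfl, rfl⟩ | ⟨rfl, rfl⟩)⟩
    · obtain ⟨g, hg, hgeq⟩ := hu
      exact absurd hgeq.symm (tagL_ne_tagR _ _)
    · obtain ⟨g, hg, hgeq⟩ := hu
      obtain rfl := tagR_inj hgeq
      obtain ⟨g', hg', hgeq'⟩ := hv
      obtain rfl := tagR_inj hgeq'
      exact h2.2.2 _ hg _ hg' hc0
    · obtain ⟨g, hg, hgeq⟩ := hu
      exact absurd hgeq.symm (tagL_ne_tagR _ _)
    · obtain ⟨g', hg', hgeq'⟩ := hv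
      exact absurd hgeq'.symm (tagL_ne_tagR _ _)

lemma sum_no_mix (hz : (esSum E1 E2).Config z) {e f : ℕ}
    (he : tagL e ∈ z) (hf : tagR f ∈ z) : False := by
  have he1 : e ∈ E1.ev := tensor_mem_ev_L (hz.1 he)
  have hf2 : f ∈ E2.ev := tensor_mem_ev_R (hz.1 hf)
  exact hz.2.2 _ he _ hf (Or.inr ⟨e, he1, f, hf2, Or.inl ⟨rfl, rfl⟩⟩)

lemma sum_config_decomp (hz : (esSum E1 E2).Config z) :
    E1.Config (preL z) ∧ E2.Config (preR z) ∧ z = tagL '' preL z ∪ tagR '' preR z := by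
  have ht : (esTensor E1 E2).Config z :=
    ⟨hz.1, hz.2.1, fun e he f hf hc => hz.2.2 e he f hf (Or.inl hc)⟩
  exact tensor_decomp ht

lemma sum_maxC_L (hz : z ∈ (esSum E1 E2).MaxC) {e0 : ℕ} (he0 : tagL e0 ∈ z) :
    preL z ∈ E1.MaxC ∧ z = tagL '' preL z := by
  obtain ⟨h1, h2, hzeq⟩ := sum_config_decomp hz.1
  have hR : preR z = ∅ := by
    ext f
    simp only [Set.mem_empty_iff_false, iff_false]
    intro hf
    exact sum_no_mix hz.1 he0 hf
  rw [hR, Set.image_empty, Set.union_empty] at hzeq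
  refine ⟨⟨h1, fun y hy hsub => ?_⟩, hzeq⟩
  have hw := config_sum_L (E2 := E2) hy
  have hzw : z ⊆ tagL '' y := by
    conv_lhs => rw [hzeq]
    exact Set.image_mono hsub
  have := hz.2 _ hw hzw
  apply Set.Subset.antisymm _ hsub
  intro e he
  have : tagL e ∈ z := by rw [← this]; exact ⟨e, he, rfl⟩
  exact this

lemma sum_maxC_R (hz : z ∈ (esSum E1 E2).MaxC) {f0 : ℕ} (hf0 : tagR f0 ∈ z) :
    preR z ∈ E2.MaxC ∧ z = tagR '' preR z := by
  obtain ⟨h1, h2, hzeq⟩ := sum_config_decomp hz.1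
  have hL : preL z = ∅ := by
    ext f
    simp only [Set.mem_empty_iff_false, iff_false]
    intro hf
    exact sum_no_mix hz.1 hf hf0
  rw [hL, Set.image_empty, Set.empty_union] at hzeq
  refine ⟨⟨h2, fun y hy hsub => ?_⟩, hzeq⟩
  have hw := config_sum_R (E1 := E1) hy
  have hzw : z ⊆ tagR '' y := by
    conv_lhs => rw [hzeq]
    exact Set.image_mono hsub
  have := hz.2 _ hw hzw
  apply Set.Subset.antisymm _ hsub
  intro e he
  have : tagR e ∈ z := by rw [← this]; exact ⟨e, he, rfl⟩
  exact this

lemma good_sum (g1 : Good E1 Γ) (g2 : Good E2 Γ) : Good (esSum E1 E2) Γ := by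
  refine ⟨(g1.fin.image tagL).union (g2.fin.image tagR), ?_, ?_, ?_⟩
  · rintro u v ((⟨e, he, f, hf, hc, rfl, rfl⟩ | ⟨e, he, f, hf, hc, rfl, rfl⟩) |
      ⟨e, he, f, hf, (⟨rfl, rfl⟩ | ⟨rfl, rfl⟩)⟩)
    · exact Or.inl (Or.inl ⟨f, hf, e, he, g1.confSymm _ _ hc, rfl, rfl⟩)
    · exact Or.inl (Or.inr ⟨f, hf, e, he, g2.confSymm _ _ hc, rfl, rfl⟩)
    · exact Or.inr ⟨e, he, f, hf, Or.inr ⟨rfl, rfl⟩⟩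
    · exact Or.inr ⟨e, he, f, hf, Or.inl ⟨rfl, rfl⟩⟩
  · rw [sum_sbjSet, g1.sbj, g2.sbj, Set.union_self]
  · intro z hz A hA
    by_cases hL : ∃ e, tagL e ∈ z
    · obtain ⟨e0, he0⟩ := hL
      obtain ⟨hmax, -⟩ := sum_maxC_L hz he0
      obtain ⟨e, he, hsbj⟩ := g1.cover _ hmax A hA
      exact ⟨tagL e, he, by rwa [sum_lbl_tagL]⟩
    · by_cases hR : ∃ f, tagR f ∈ z
      · obtain ⟨f0, hf0⟩ := hR
        obtain ⟨hmax, -⟩ := sum_maxC_R hz hf0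
        obtain ⟨e, he, hsbj⟩ := g2.cover _ hmax A hA
        exact ⟨tagR e, he, by rwa [sum_lbl_tagR]⟩
      · exfalso
        obtain ⟨x1, hx1⟩ := maxC_nonempty E1 g1.fin
        obtain ⟨e1, he1, -⟩ := g1.cover _ hx1 A hA
        have hzempty : z = ∅ := by
          ext u
          simp only [Set.mem_empty_iff_false, iff_false]
          intro hu
          rcases hz.1.1 hu with ⟨e, _, rfl⟩ | ⟨e, _, rfl⟩
          · exact hL ⟨e, hu⟩
          · exact hR ⟨e, hu⟩
        have hw := config_sum_L (E2 := E2) hx1.1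
        have := hz.2 _ hw (by rw [hzempty]; exact Set.empty_subset _)
        rw [hzempty] at this
        have : tagL e1 ∈ (∅ : Set ℕ) := by rw [← this]; exact ⟨e1, he1, rfl⟩
        exact this

end SumLemmas
section SeqLemmas
variable {P M : Type} {E1 E2 : ES P M} {Γ1 Γ2 : Set P} {x x' y z x1 : Set ℕ}

/-- Preimage of the copy injection with index `k`. -/
def preC (k : ℕ) (z : Set ℕ) : Set ℕ := {f | tagC k f ∈ z}

lemma maxC_set_finite {E : ES P M} (hfin : E.ev.Finite) : E.MaxC.Finite :=
  hfin.finite_subsets.subset (fun _ hx => hx.1.1)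

lemma encSet_maxC_inj {E : ES P M} (hfin : E.ev.Finite) (hx : x ∈ E.MaxC)
    (hx' : x' ∈ E.MaxC) (h : encSet x = encSet x') : x = x' :=
  encSet_inj (maxC_finite hfin hx) (maxC_finite hfin hx') h

lemma seq_lbl_tagL (e : ℕ) : (esSeq E1 E2).lbl (tagL e) = E1.lbl e := by
  simp [esSeq, tagL, Nat.unpair_pair]

lemma seq_lbl_tagC (k f : ℕ) : (esSeq E1 E2).lbl (tagC k f) = E2.lbl f := by
  simp [esSeq, tagC, Nat.unpair_pair]

lemma seq_mem_ev_L {e : ℕ} (h : tagL e ∈ (esSeq E1 E2).ev) : e ∈ E1.ev := by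
  rcases h with ⟨e', he', heq⟩ | ⟨x, hx, f, hf, heq⟩
  · rwa [← tagL_inj heq]
  · exact absurd heq (tagL_ne_tagC _ _ _)

lemma seq_mem_ev_C {k f : ℕ} (h : tagC k f ∈ (esSeq E1 E2).ev) :
    ∃ x ∈ E1.MaxC, k = encSet x ∧ f ∈ E2.ev := by
  rcases h with ⟨e', he', heq⟩ | ⟨x, hx, f', hf', heq⟩
  · exact absurd heq (tagL_ne_tagC _ _ _)
  · obtain ⟨hk, hfe⟩ := tagC_inj heq
    exact ⟨x, hx, hk, hfe ▸ hf'⟩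

lemma seq_ev_tagL {e : ℕ} (he : e ∈ E1.ev) : tagL e ∈ (esSeq E1 E2).ev :=
  Or.inl ⟨e, he, rfl⟩

lemma seq_ev_tagC (hx : x ∈ E1.MaxC) {f : ℕ} (hf : f ∈ E2.ev) :
    tagC (encSet x) f ∈ (esSeq E1 E2).ev :=
  Or.inr ⟨x, hx, f, hf, rfl⟩

lemma mem_tagL_union {e : ℕ} {s t : Set ℕ} {k : ℕ}
    (h : tagL e ∈ tagL '' s ∪ tagC k '' t) : e ∈ s := by
  rcases h with ⟨e', he', heq⟩ | ⟨f, hf, heq⟩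
  · rwa [← tagL_inj heq]
  · exact absurd heq.symm (tagL_ne_tagC _ _ _)

lemma mem_tagC_union {f : ℕ} {s t : Set ℕ} {k k' : ℕ}
    (h : tagC k f ∈ tagL '' s ∪ tagC k' '' t) : k = k' ∧ f ∈ t := by
  rcases h with ⟨e', he', heq⟩ | ⟨f', hf', heq⟩
  · exact absurd heq (tagL_ne_tagC _ _ _)
  · obtain ⟨hk, hf⟩ := tagC_inj heq.symm
    exact ⟨hk, hf ▸ hf'⟩

lemma seq_ev_finite (hfin1 : E1.ev.Finite) (hfin2 : E2.ev.Finite) :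
    (esSeq E1 E2).ev.Finite := by
  apply Set.Finite.union (hfin1.image tagL)
  have : {u | ∃ x ∈ E1.MaxC, ∃ e ∈ E2.ev, u = tagC (encSet x) e}
      = Set.image2 (fun x e => tagC (encSet x) e) E1.MaxC E2.ev := by
    ext u
    simp only [Set.mem_setOf_eq, Set.mem_image2]
    constructor
    · rintro ⟨x, hx, e, he, rfl⟩; exact ⟨x, hx, e, he, rfl⟩
    · rintro ⟨x, hx, e, he, rfl⟩; exact ⟨x, hx, e, he, rfl⟩
  rw [this]
  exact Set.Finite.image2 _ (maxC_set_finite hfin1) hfin2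

end SeqLemmas
section SeqLemmas2
variable {P M : Type} {E1 E2 : ES P M} {x x' y z x1 : Set ℕ}

lemma seq_config_mk (hfin1 : E1.ev.Finite) (hx : x ∈ E1.MaxC) (hx1 : E1.Config x1)
    (hsub : x ⊆ x1) (hy : E2.Config y) :
    (esSeq E1 E2).Config (tagL '' x1 ∪ tagC (encSet x) '' y) := by
  refine ⟨?_, ?_, ?_⟩
  · rintro u (⟨e, he, rfl⟩ | ⟨f, hf, rfl⟩)
    · exact seq_ev_tagL (hx1.1 he)
    · exact seq_ev_tagC hx (hy.1 hf)
  · rintro e he f hf hle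
    rcases hle with ⟨e0, he0, f0, hf0, hle0, rfl, rfl⟩ |
      ⟨x', hx', e0, he0, f0, hf0, hle0, rfl, rfl⟩ |
      ⟨x', hx', e0, he0, f0, hf0, hsbj, rfl, rfl⟩
    · have hf0x : f0 ∈ x1 := mem_tagL_union he
      exact Or.inl ⟨e0, hx1.2.1 f0 hf0x e0 he0 hle0, rfl⟩
    · obtain ⟨hk, hf0y⟩ := mem_tagC_union he
      obtain rfl := encSet_maxC_inj hfin1 hx' hx hk
      exact Or.inr ⟨e0, hy.2.1 f0 hf0y e0 he0 hle0, rfl⟩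
    · obtain ⟨hk, -⟩ := mem_tagC_union he
      obtain rfl := encSet_maxC_inj hfin1 hx' hx hk
      exact Or.inl ⟨e0, hsub he0, rfl⟩
  · rintro u hu v hv hc
    rcases hc with ⟨e0, he0, f0, hf0, hc0, rfl, rfl⟩ |
      ⟨x', hx', e0, he0, f0, hf0, hc0, rfl, rfl⟩ |
      ⟨x', hx', x'', hx'', hne, e0, he0, f0, hf0, rfl, rfl⟩ |
      ⟨x', hx', e0, he0, ⟨e', he', hce⟩, f0, hf0, (⟨rfl, rfl⟩ | ⟨rfl, rfl⟩)⟩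
    · exact hx1.2.2 _ (mem_tagL_union hu) _ (mem_tagL_union hv) hc0
    · obtain ⟨hk, he0y⟩ := mem_tagC_union hu
      obtain ⟨-, hf0y⟩ := mem_tagC_union hv
      exact hy.2.2 _ he0y _ hf0y hc0
    · obtain ⟨hk1, -⟩ := mem_tagC_union hu
      obtain ⟨hk2, -⟩ := mem_tagC_union hv
      exact hne (encSet_maxC_inj hfin1 hx' hx (hk1) ▸
        (encSet_maxC_inj hfin1 hx'' hx (hk2)).symm ▸ rfl)
    · obtain ⟨hk, -⟩ := mem_tagC_union hv
      obtain rfl := encSet_maxC_inj hfin1 hx' hx hk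
      exact hx1.2.2 _ (mem_tagL_union hu) _ (hsub he') hce
    · obtain ⟨hk, -⟩ := mem_tagC_union hu
      obtain rfl := encSet_maxC_inj hfin1 hx' hx hk
      exact hx1.2.2 _ (mem_tagL_union hv) _ (hsub he') hce

lemma seq_preL_config (hz : (esSeq E1 E2).Config z) : E1.Config (preL z) := by
  refine ⟨fun e he => seq_mem_ev_L (hz.1 he), ?_, ?_⟩
  · intro e he f hf hle
    exact hz.2.1 (tagL e) he (tagL f) (seq_ev_tagL hf)
      (Or.inl ⟨f, hf, e, seq_mem_ev_L (hz.1 he), hle, rfl, rfl⟩)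
  · intro e he f hf hc
    exact hz.2.2 _ he _ hf
      (Or.inl ⟨e, seq_mem_ev_L (hz.1 he), f, seq_mem_ev_L (hz.1 hf), hc, rfl, rfl⟩)

lemma seq_preC_config (hx : x ∈ E1.MaxC) (hz : (esSeq E1 E2).Config z) :
    E2.Config (preC (encSet x) z) := by
  refine ⟨fun f hf => ?_, ?_, ?_⟩
  · obtain ⟨x', hx', hk, hf2⟩ := seq_mem_ev_C (hz.1 hf)
    exact hf2
  · intro f hf g hg hle
    obtain ⟨x'', hx'', hk, hf2⟩ := seq_mem_ev_C (hz.1 hf)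
    exact hz.2.1 _ hf _ (seq_ev_tagC hx hg)
      (Or.inr (Or.inl ⟨x, hx, g, hg, f, hf2, hle, rfl, rfl⟩))
  · intro f hf g hg hc
    obtain ⟨-, -, -, hf2⟩ := seq_mem_ev_C (hz.1 hf)
    obtain ⟨-, -, -, hg2⟩ := seq_mem_ev_C (hz.1 hg)
    exact hz.2.2 _ hf _ hg (Or.inr (Or.inl ⟨x, hx, f, hf2, g, hg2, hc, rfl, rfl⟩))

lemma seq_decomp_noC (hz : (esSeq E1 E2).Config z)
    (hnoC : ∀ k f, tagC k f ∉ z) : z = tagL '' preL z := by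
  ext u
  constructor
  · intro hu
    rcases hz.1 hu with ⟨e, he, rfl⟩ | ⟨x', hx', f, hf, rfl⟩
    · exact ⟨e, hu, rfl⟩
    · exact absurd hu (hnoC _ _)
  · rintro ⟨e, he, rfl⟩
    exact he

lemma seq_decomp_C (hfin1 : E1.ev.Finite) (hz : (esSeq E1 E2).Config z)
    (hx : x ∈ E1.MaxC) {f0 : ℕ} (hf0 : tagC (encSet x) f0 ∈ z) :
    z = tagL '' preL z ∪ tagC (encSet x) '' preC (encSet x) z := by
  obtain ⟨x0, hx0, hk0, hf02⟩ := seq_mem_ev_C (hz.1 hf0)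
  ext u
  constructor
  · intro hu
    rcases hz.1 hu with ⟨e, he, rfl⟩ | ⟨x', hx', f, hf, rfl⟩
    · exact Or.inl ⟨e, hu, rfl⟩
    · have hkk : encSet x' = encSet x := by
        by_contra hne
        have hxx : x' ≠ x := fun h => hne (h ▸ rfl)
        exact hz.2.2 _ hu _ hf0
          (Or.inr (Or.inr (Or.inl ⟨x', hx', x, hx, hxx, f, hf, f0, hf02, rfl, rfl⟩)))
      refine Or.inr ⟨f, ?_, by rw [hkk]⟩
      show tagC (encSet x) f ∈ z
      rw [← hkk]
      exact hu
  · rintro (⟨e, he, rfl⟩ | ⟨f, hf, rfl⟩) <;> exact ‹_›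

lemma seq_maxC (hfin1 : E1.ev.Finite) (hfin2 : E2.ev.Finite)
    (hsym : ∀ u v, E1.conf u v → E1.conf v u)
    (hz : z ∈ (esSeq E1 E2).MaxC) :
    ∃ x ∈ E1.MaxC, ∃ y ∈ E2.MaxC, z = tagL '' x ∪ tagC (encSet x) '' y := by
  classical
  have hzL := seq_preL_config hz.1
  by_cases hC : ∃ k f, tagC k f ∈ z
  · obtain ⟨k, f0, hf0⟩ := hC
    obtain ⟨x, hx, rfl, hf02⟩ := seq_mem_ev_C (hz.1.1 hf0)
    have hzeq := seq_decomp_C hfin1 hz.1 hx hf0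
    -- x ∪ preL z is a configuration of E1
    have hunion : E1.Config (x ∪ preL z) := by
      refine ⟨Set.union_subset hx.1.1 hzL.1, ?_, ?_⟩
      · rintro e (he | he) f hf hle
        · exact Or.inl (hx.1.2.1 e he f hf hle)
        · exact Or.inr (hzL.2.1 e he f hf hle)
      · rintro e (he | he) f (hf | hf) hc
        · exact hx.1.2.2 e he f hf hc
        · -- e ∈ x, f ∈ preL z, conflict
          exact hz.1.2.2 _ hf _ hf0
            (Or.inr (Or.inr (Or.inr ⟨x, hx, f, hzL.1 hf, ⟨e, he, hsym _ _ hc⟩, f0, hf02,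
              Or.inl ⟨rfl, rfl⟩⟩)))
        · exact hz.1.2.2 _ he _ hf0
            (Or.inr (Or.inr (Or.inr ⟨x, hx, e, hzL.1 he, ⟨f, hf, hc⟩, f0, hf02,
              Or.inl ⟨rfl, rfl⟩⟩)))
        · exact hzL.2.2 e he f hf hc
    have hsubLx : preL z ⊆ x := by
      have := hx.2 _ hunion Set.subset_union_left
      intro e he
      rw [← this]
      exact Or.inr he
    have hzC := seq_preC_config hx hz.1
    have hw := seq_config_mk hfin1 hx hx.1 Set.Subset.rfl hzC
    have hzw : z ⊆ tagL '' x ∪ tagC (encSet x) '' preC (encSet x) z := by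
      conv_lhs => rw [hzeq]
      exact Set.union_subset_union_left _ (Set.image_mono hsubLx)
    have heq := hz.2 _ hw hzw
    refine ⟨x, hx, preC (encSet x) z, ⟨hzC, fun y hy hsub => ?_⟩, heq.symm⟩
    have hw' := seq_config_mk hfin1 hx hx.1 Set.Subset.rfl hy
    have hzw' : z ⊆ tagL '' x ∪ tagC (encSet x) '' y := by
      conv_lhs => rw [hzeq]
      exact Set.union_subset_union (Set.image_mono hsubLx) (Set.image_mono hsub)
    have heq' := hz.2 _ hw' hzw'
    apply Set.Subset.antisymm _ hsub
    intro f hf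
    show tagC (encSet x) f ∈ z
    rw [← heq']
    exact Or.inr ⟨f, hf, rfl⟩
  · push_neg at hC
    have hzeq := seq_decomp_noC hz.1 hC
    obtain ⟨x, hx, hsub⟩ := exists_maxC hfin1 hzL
    obtain ⟨y2, hy2⟩ := maxC_nonempty E2 hfin2
    have hw := seq_config_mk hfin1 hx hx.1 Set.Subset.rfl hy2.1
    have hzw : z ⊆ tagL '' x ∪ tagC (encSet x) '' y2 := by
      conv_lhs => rw [hzeq]
      exact (Set.image_mono hsub).trans Set.subset_union_left
    exact ⟨x, hx, y2, hy2, (hz.2 _ hw hzw).symm⟩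

end SeqLemmas2
section SeqLemmas3
variable {P M : Type} {E1 E2 : ES P M} {Γ1 Γ2 : Set P} {A : P}

lemma good_seq (g1 : Good E1 Γ1) (g2 : Good E2 Γ2) :
    Good (esSeq E1 E2) (Γ1 ∪ Γ2) := by
  refine ⟨seq_ev_finite g1.fin g2.fin, ?_, ?_, ?_⟩
  · rintro u v (⟨e, he, f, hf, hc, rfl, rfl⟩ |
      ⟨x', hx', e, he, f, hf, hc, rfl, rfl⟩ |
      ⟨x', hx', x'', hx'', hne, e, he, f, hf, rfl, rfl⟩ |
      ⟨x', hx', e, he, hce, f, hf, (⟨rfl, rfl⟩ | ⟨rfl, rfl⟩)⟩)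
    · exact Or.inl ⟨f, hf, e, he, g1.confSymm _ _ hc, rfl, rfl⟩
    · exact Or.inr (Or.inl ⟨x', hx', f, hf, e, he, g2.confSymm _ _ hc, rfl, rfl⟩)
    · exact Or.inr (Or.inr (Or.inl ⟨x'', hx'', x', hx', hne.symm, f, hf, e, he, rfl, rfl⟩))
    · exact Or.inr (Or.inr (Or.inr ⟨x', hx', e, he, hce, f, hf, Or.inr ⟨rfl, rfl⟩⟩))
    · exact Or.inr (Or.inr (Or.inr ⟨x', hx', e, he, hce, f, hf, Or.inl ⟨rfl, rfl⟩⟩))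
  · ext B
    rw [Set.mem_union, mem_sbjSet_iff, ← g1.sbj, ← g2.sbj, mem_sbjSet_iff, mem_sbjSet_iff]
    constructor
    · rintro ⟨u, hu, hsbj⟩
      rcases hu with ⟨e, he, rfl⟩ | ⟨x', hx', f, hf, rfl⟩
      · rw [seq_lbl_tagL] at hsbj
        exact Or.inl ⟨e, he, hsbj⟩
      · rw [seq_lbl_tagC] at hsbj
        exact Or.inr ⟨f, hf, hsbj⟩
    · rintro (⟨e, he, hsbj⟩ | ⟨f, hf, hsbj⟩)
      · exact ⟨tagL e, seq_ev_tagL he, by rwa [seq_lbl_tagL]⟩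
      · obtain ⟨x0, hx0⟩ := maxC_nonempty E1 g1.fin
        exact ⟨tagC (encSet x0) f, seq_ev_tagC hx0 hf, by rwa [seq_lbl_tagC]⟩
  · intro z hz B hB
    obtain ⟨x, hx, y, hy, hzeq⟩ := seq_maxC g1.fin g2.fin g1.confSymm hz
    rcases hB with hB | hB
    · obtain ⟨e, he, hsbj⟩ := g1.cover x hx B hB
      refine ⟨tagL e, ?_, by rwa [seq_lbl_tagL]⟩
      rw [hzeq]
      exact Or.inl ⟨e, he, rfl⟩
    · obtain ⟨f, hf, hsbj⟩ := g2.cover y hy B hB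
      refine ⟨tagC (encSet x) f, ?_, by rwa [seq_lbl_tagC]⟩
      rw [hzeq]
      exact Or.inr ⟨f, hf, rfl⟩

lemma minLblP_seq_mem
    (hcov : ∀ x ∈ E1.MaxC, ∃ e ∈ x, (E1.lbl e).sbj = A) :
    minLblP (esSeq E1 E2) A = minLblP E1 A := by
  ext l
  rw [mem_minLblP, mem_minLblP]
  constructor
  · rintro ⟨u, ⟨hu, hsbj⟩, rfl, hmin⟩
    rcases hu with ⟨e, he, rfl⟩ | ⟨x', hx', f, hf, rfl⟩
    · rw [seq_lbl_tagL] at hsbj ⊢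
      refine ⟨e, ⟨he, hsbj⟩, rfl, fun f hf hfs hle => ?_⟩
      exact tagL_inj (hmin (tagL f) (seq_ev_tagL hf) (by rwa [seq_lbl_tagL])
        (Or.inl ⟨f, hf, e, he, hle, rfl, rfl⟩))
    · exfalso
      obtain ⟨e, hex, hesbj⟩ := hcov x' hx'
      rw [seq_lbl_tagC] at hsbj
      have := hmin (tagL e) (seq_ev_tagL (hx'.1.1 hex)) (by rwa [seq_lbl_tagL])
        (Or.inr (Or.inr ⟨x', hx', e, hex, f, hf, hesbj.trans hsbj.symm, rfl, rfl⟩))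
      exact tagL_ne_tagC _ _ _ this
  · rintro ⟨e, ⟨he, hsbj⟩, rfl, hmin⟩
    refine ⟨tagL e, ⟨seq_ev_tagL he, by rwa [seq_lbl_tagL]⟩, seq_lbl_tagL e, ?_⟩
    rintro u hu hus (⟨e0, he0, f0, hf0, hle0, rfl, heq⟩ |
      ⟨x', hx', e0, he0, f0, hf0, hle0, rfl, heq⟩ |
      ⟨x', hx', e0, he0, f0, hf0, hsbj0, rfl, heq⟩)
    · obtain rfl := tagL_inj heq
      rw [seq_lbl_tagL] at hus
      rw [hmin e0 he0 hus hle0]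
    · exact absurd heq (tagL_ne_tagC _ _ _)
    · exact absurd heq (tagL_ne_tagC _ _ _)

lemma minLblP_seq_not_mem (hfin1 : E1.ev.Finite)
    (hnone : ∀ e ∈ E1.ev, (E1.lbl e).sbj ≠ A) :
    minLblP (esSeq E1 E2) A = minLblP E2 A := by
  ext l
  rw [mem_minLblP, mem_minLblP]
  constructor
  · rintro ⟨u, ⟨hu, hsbj⟩, rfl, hmin⟩
    rcases hu with ⟨e, he, rfl⟩ | ⟨x', hx', f, hf, rfl⟩
    · rw [seq_lbl_tagL] at hsbj
      exact absurd hsbj (hnone e he)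
    · rw [seq_lbl_tagC] at hsbj ⊢
      refine ⟨f, ⟨hf, hsbj⟩, rfl, fun f' hf' hfs hle => ?_⟩
      have := hmin (tagC (encSet x') f') (seq_ev_tagC hx' hf') (by rwa [seq_lbl_tagC])
        (Or.inr (Or.inl ⟨x', hx', f', hf', f, hf, hle, rfl, rfl⟩))
      exact (tagC_inj this).2
  · rintro ⟨f, ⟨hf, hsbj⟩, rfl, hmin⟩
    obtain ⟨x0, hx0⟩ := maxC_nonempty E1 hfin1
    refine ⟨tagC (encSet x0) f, ⟨seq_ev_tagC hx0 hf, by rwa [seq_lbl_tagC]⟩,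
      seq_lbl_tagC _ f, ?_⟩
    rintro u hu hus (⟨e0, he0, f0, hf0, hle0, rfl, heq⟩ |
      ⟨x', hx', e0, he0, f0, hf0, hle0, rfl, heq⟩ |
      ⟨x', hx', e0, he0, f0, hf0, hsbj0, rfl, heq⟩)
    · exact absurd heq ((tagL_ne_tagC _ _ _).symm)
    · obtain ⟨hk, rfl⟩ := tagC_inj heq
      rw [seq_lbl_tagC] at hus
      rw [hmin e0 he0 hus hle0, hk]
    · rw [seq_lbl_tagL] at hus
      exact absurd hus (hnone e0 (hx'.1.1 he0))

end SeqLemmas3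
section Main
variable {P M : Type}

lemma wb_of_compch {E1 E2 : ES P M} {Γ : Set P} {φ1 φ2 : Set (Label P M)}
    (g1 : Good E1 Γ) (g2 : Good E2 Γ)
    (h1 : ∀ A, hat φ1 A = minLblP E1 A) (h2 : ∀ A, hat φ2 A = minLblP E2 A)
    (hc : compch φ1 φ2 Γ) : wb E1 E2 := by
  classical
  obtain ⟨A, hAΓ, ⟨⟨hdisj, hsub⟩, hne1, hne2⟩, huniq, hpass⟩ := hc
  refine ⟨A, ?_, ?_, ?_⟩
  · exact ⟨by rw [← h1]; exact hne1, by rw [← h2]; exact hne2,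
      by rw [← h1, ← h2]; exact hdisj,
      by rw [← h1, ← h2]; exact hsub⟩
  · intro A' hA'
    obtain ⟨hne1', hne2', hdisj', hsub'⟩ := hA'
    have hA'Γ : A' ∈ Γ := by
      by_contra hn
      exact hne1' (g1.minLblP_empty' hn)
    exact huniq A' hA'Γ ⟨⟨by rw [h1, h2]; exact hdisj', by rw [h1, h2]; exact hsub'⟩,
      by rw [h1]; exact hne1', by rw [h2]; exact hne2'⟩
  · intro B hBA
    by_cases hBΓ : B ∈ Γ
    · obtain ⟨⟨hd, hs⟩, hiff⟩ := hpass B hBΓ hBA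
      exact ⟨by rw [← h1, ← h2]; exact hd,
        by rw [← h1, ← h2]; exact hs,
        by rw [← h1, ← h2]; exact hiff⟩
    · refine ⟨?_, ?_, ?_⟩ <;>
        rw [g1.minLblP_empty' hBΓ, g2.minLblP_empty' hBΓ] <;> simp

theorem sound [Nonempty P] [Nonempty M] {Γ : Set P} {G : GC P M} {φ Λ : Set (Label P M)}
    (h : Typing Γ G φ Λ) :
    ∃ E, gsem G = some E ∧ Good E Γ ∧ ∀ A, hat φ A = minLblP E A := by
  classical
  induction h with
  | temp => exact ⟨esEmpty, rfl, good_esEmpty, hat_minLblP_esEmpty⟩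
  | @tint a b m hab =>
    exact ⟨esAct a b m, by simp [gsem, hab], good_esAct hab, hat_minLblP_esAct hab⟩
  | @tseq Γ1 Γ2 g1 g2 φ1 φ2 Λ1 Λ2 h1 h2 ih1 ih2 =>
    obtain ⟨E1, hg1, good1, hm1⟩ := ih1
    obtain ⟨E2, hg2, good2, hm2⟩ := ih2
    refine ⟨esSeq E1 E2, by simp [gsem, hg1, hg2], good_seq good1 good2, ?_⟩
    intro A
    by_cases hA : A ∈ Γ1
    · rw [hat_union, hat_lminus_mem hA, Set.union_empty, hm1 A,
        minLblP_seq_mem (fun x hx => good1.cover x hx A hA)]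
    · rw [hat_union, hat_lminus_not_mem hA, hm1 A, good1.minLblP_empty' hA,
        Set.empty_union, hm2 A,
        minLblP_seq_not_mem good1.fin (fun e he hs => hA (by rw [← hs]; exact good1.sbj_mem he))]
  | @tpar Γ1 Γ2 g1 g2 φ1 φ2 Λ1 Λ2 h1 h2 hdisj ih1 ih2 =>
    obtain ⟨E1, hg1, good1, hm1⟩ := ih1
    obtain ⟨E2, hg2, good2, hm2⟩ := ih2
    have hld : Disjoint E1.lblSet E2.lblSet := by
      rw [Set.disjoint_left]
      rintro l ⟨e, he, rfl⟩ ⟨f, hf, hlf⟩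
      have m1 : (E1.lbl e).sbj ∈ Γ1 := good1.sbj_mem he
      have m2 : (E1.lbl e).sbj ∈ Γ2 := by
        rw [← hlf]; exact good2.sbj_mem hf
      have : (E1.lbl e).sbj ∈ Γ1 ∩ Γ2 := ⟨m1, m2⟩
      rw [hdisj] at this
      exact this
    refine ⟨esTensor E1 E2, by simp [gsem, hg1, hg2, hld], good_tensor good1 good2, ?_⟩
    intro A
    rw [hat_union, hm1, hm2, minLblP_tensor]
  | @tch Γ g1 g2 φ1 φ2 Λ1 Λ2 h1 h2 hcomp ih1 ih2 =>
    obtain ⟨E1, hg1, good1, hm1⟩ := ih1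
    obtain ⟨E2, hg2, good2, hm2⟩ := ih2
    have hwb : wb E1 E2 := wb_of_compch good1 good2 hm1 hm2 hcomp
    refine ⟨esSum E1 E2, by simp [gsem, hg1, hg2, hwb], good_sum good1 good2, ?_⟩
    intro A
    rw [hat_union, hm1, hm2, minLblP_sum]

end Main

/-- Every typable ground g-choreography is well-formed: if `Π ⊢ G : ⟨φ,Λ⟩` is derivable
then `⟦G⟧ ≠ ⊥`. -/
theorem typable_well_formed {P M : Type} [Infinite P] [Infinite M]
    {Γ : Set P} {G : GC P M} {φ Λ : Set (Label P M)}
    (h : Typing Γ G φ Λ) :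
    gsem G ≠ none := by
  obtain ⟨E, hE, -, -⟩ := sound h
  rw [hE]
  simp

end Choreo
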